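/- Let S be a C-semigroup with multiplicity m(S) = min_⪯(S \ {0}) and suppose x ∈ SG(S) is a special gap with x ≺ m(S). Then T = S ∪ {x} is a C-semigroup with m(T) = x, and T \ {m(T)} = S. -/
import Mathlib


/-- A monomial order on `ℕ^d`: a total order compatible with addition,
with `0` as least element. -/
def IsMonomialOrder (d : ℕ) (le : (Fin d → ℕ) → (Fin d → ℕ) → Prop) : Prop :=
  (∀ a, le a a) ∧ (∀ a b, le a b → le b a → a = b) ∧
  (∀ a b c, le a b → le b c → le a c) ∧ (∀ a b, le a b ∨ le b a) ∧
  (∀ a b c, le a b → le (a + c) (b + c)) ∧ (∀ a, le 0 a)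

/-- `S` is a `C`-semigroup: a submonoid of the cone `C` with finite complement in `C`. -/
def IsCSgp {d : ℕ} (C : AddSubmonoid (Fin d → ℕ)) (S : Set (Fin d → ℕ)) : Prop :=
  0 ∈ S ∧ (∀ x ∈ S, ∀ y ∈ S, x + y ∈ S) ∧ S ⊆ (C : Set (Fin d → ℕ)) ∧
    ((C : Set (Fin d → ℕ)) \ S).Finite

/-- `S` is a `P`-semigroup: for every nonzero `s ∈ S` there is `p ∈ P` with `s + p ∈ S`. -/
def IsPSgp {d : ℕ} (P : Set (Fin d → ℕ)) (S : Set (Fin d → ℕ)) : Prop :=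
  ∀ s ∈ S, s ≠ 0 → ∃ p ∈ P, s + p ∈ S

/-- `a` is a minimal generator of `S`. -/
def IsMinGen {d : ℕ} (S : Set (Fin d → ℕ)) (a : Fin d → ℕ) : Prop :=
  a ∈ S ∧ a ≠ 0 ∧ ¬ ∃ x ∈ S, ∃ y ∈ S, x ≠ 0 ∧ y ≠ 0 ∧ a = x + y

theorem stmt_16 {d : ℕ} (C : AddSubmonoid (Fin d → ℕ)) (hCfg : C.FG)
    (le : (Fin d → ℕ) → (Fin d → ℕ) → Prop) (hle : IsMonomialOrder d le)
    (S : Set (Fin d → ℕ)) (hS : IsCSgp C S)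
    (m : Fin d → ℕ) (hmS : m ∈ S) (hm0 : m ≠ 0)
    (hmmin : ∀ s ∈ S, s ≠ 0 → le m s)
    (x : Fin d → ℕ) (hx : x ∈ (C : Set (Fin d → ℕ)) \ S)
    (h2x : x + x ∈ S) (hxs : ∀ s ∈ S, s ≠ 0 → x + s ∈ S)
    (hxm : le x m ∧ x ≠ m) :
    IsCSgp C (insert x S) ∧
      (x ∈ insert x S ∧ x ≠ 0 ∧ ∀ s ∈ insert x S, s ≠ 0 → le x s) ∧
      insert x S \ {x} = S := by
  obtain ⟨h0S, hadd, hsub, hfin⟩ := hS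
  have hxnS : x ∉ S := hx.2
  have hx0 : x ≠ 0 := fun h => hxnS (h ▸ h0S)
  obtain ⟨hrefl, hanti, htrans, htot, hcomp, hzero⟩ := hle
  refine ⟨⟨Set.mem_insert_of_mem _ h0S, ?_, ?_, ?_⟩, ⟨Set.mem_insert _ _, hx0, ?_⟩, ?_⟩
  · rintro a (rfl | ha) b (rfl | hb)
    · exact Set.mem_insert_of_mem _ h2x
    · rcases eq_or_ne b 0 with rfl | hb0
      · simpa using Set.mem_insert a S
      · exact Set.mem_insert_of_mem _ (hxs b hb hb0)
    · rcases eq_or_ne a 0 with rfl | ha0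
      · simpa using Set.mem_insert b S
      · rw [add_comm]; exact Set.mem_insert_of_mem _ (hxs a ha ha0)
    · exact Set.mem_insert_of_mem _ (hadd a ha b hb)
  · rintro a (rfl | ha)
    · exact hx.1
    · exact hsub ha
  · exact hfin.subset (by intro y hy; exact ⟨hy.1, fun h => hy.2 (Set.mem_insert_of_mem _ h)⟩)
  · rintro s (rfl | hs) hs0
    · exact hrefl s
    · exact htrans x m s hxm.1 (hmmin s hs hs0)
  · ext a
    simp only [Set.mem_diff, Set.mem_insert_iff, Set.mem_singleton_iff]
    constructor
    · rintro ⟨rfl | ha, hne⟩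
      · exact absurd rfl hne
      · exact ha
    · exact fun ha => ⟨Or.inr ha, fun h => hxnS (h ▸ ha)⟩
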